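/- For the depth-k uniform random partitioning tree on [0,1]^p in which at each of k recursive steps a coordinate is chosen uniformly at random and a split point is chosen uniformly over the current cell's range in that coordinate, the kernel K*(x, y) = P(y lies in the same leaf cell as x) is a continuous function of (x, y) on [0,1]^p × [0,1]^p. -/

import Mathlib

open MeasureTheory Classical Topology

/-- `sameCell p splits lo hi x y` : after recursively applying the splits
`(j, u)` — split the current cell `[lo, hi]` in coordinate `j` at the point
`lo j + u * (hi j - lo j)` — the points `x` and `y` still lie in the same cell. -/
def sameCell (p : ℕ) : List (Fin p × ℝ) → (Fin p → ℝ) → (Fin p → ℝ) →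
    (Fin p → ℝ) → (Fin p → ℝ) → Prop
  | [], _, _, _, _ => True
  | ju :: rest, lo, hi, x, y =>
      let s := lo ju.1 + ju.2 * (hi ju.1 - lo ju.1)
      if x ju.1 ≤ s ∧ y ju.1 ≤ s then
        sameCell p rest lo (Function.update hi ju.1 s) x y
      else if s < x ju.1 ∧ s < y ju.1 then
        sameCell p rest (Function.update lo ju.1 s) hi x y
      else False

abbrev Par (p : ℕ) := (Fin p → ℝ) × (Fin p → ℝ) × (Fin p → ℝ) × (Fin p → ℝ)

lemma meas_eval (p : ℕ) : Measurable fun z : (Fin p → ℝ) × Fin p => z.1 z.2 :=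
  measurable_from_prod_countable_left fun j => measurable_pi_apply j

lemma meas_update (p : ℕ) :
    Measurable fun z : (Fin p → ℝ) × Fin p × ℝ => Function.update z.1 z.2.1 z.2.2 := by
  apply measurable_pi_lambda
  intro j'
  have : (fun z : (Fin p → ℝ) × Fin p × ℝ => Function.update z.1 z.2.1 z.2.2 j')
      = fun z => if j' = z.2.1 then z.2.2 else z.1 j' := by
    funext z; rw [Function.update_apply]
  rw [this]
  have hset : MeasurableSet {z : (Fin p → ℝ) × Fin p × ℝ | j' = z.2.1} := by
    have : {z : (Fin p → ℝ) × Fin p × ℝ | j' = z.2.1}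
        = (fun z : (Fin p → ℝ) × Fin p × ℝ => z.2.1) ⁻¹' {j'} := by
      ext z; simp [eq_comm]
    rw [this]; exact (measurable_fst.comp measurable_snd) (MeasurableSet.singleton j')
  exact Measurable.ite hset (measurable_snd.comp measurable_snd)
    ((measurable_pi_apply j').comp measurable_fst)

lemma measurableSet_joint (p : ℕ) :
    ∀ n : ℕ, MeasurableSet {z : (Fin n → Fin p × ℝ) × Par p |
      sameCell p (List.ofFn z.1) z.2.1 z.2.2.1 z.2.2.2.1 z.2.2.2.2} := by
  intro n
  induction n with
  | zero =>
    have : {z : (Fin 0 → Fin p × ℝ) × Par p |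
        sameCell p (List.ofFn z.1) z.2.1 z.2.2.1 z.2.2.2.1 z.2.2.2.2} = Set.univ := by
      ext z; simp [List.ofFn_zero, sameCell]
    rw [this]; exact MeasurableSet.univ
  | succ n ih =>
    -- notation
    set α := Fin p × ℝ
    -- component measurable functions
    have mj : Measurable fun z : (Fin (n+1) → α) × Par p => (z.1 0).1 :=
      ((measurable_pi_apply 0).comp measurable_fst).fst
    have mu : Measurable fun z : (Fin (n+1) → α) × Par p => (z.1 0).2 :=
      ((measurable_pi_apply 0).comp measurable_fst).snd
    have mlo : Measurable fun z : (Fin (n+1) → α) × Par p => z.2.1 ((z.1 0).1) :=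
      (meas_eval p).comp ((measurable_fst.comp measurable_snd).prodMk mj)
    have mhi : Measurable fun z : (Fin (n+1) → α) × Par p => z.2.2.1 ((z.1 0).1) :=
      (meas_eval p).comp ((measurable_fst.comp (measurable_snd.comp measurable_snd)).prodMk mj)
    have mx : Measurable fun z : (Fin (n+1) → α) × Par p => z.2.2.2.1 ((z.1 0).1) :=
      (meas_eval p).comp
        ((measurable_fst.comp (measurable_snd.comp (measurable_snd.comp measurable_snd))).prodMk mj)
    have my : Measurable fun z : (Fin (n+1) → α) × Par p => z.2.2.2.2 ((z.1 0).1) :=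
      (meas_eval p).comp
        ((measurable_snd.comp (measurable_snd.comp (measurable_snd.comp measurable_snd))).prodMk mj)
    have ms : Measurable fun z : (Fin (n+1) → α) × Par p =>
        z.2.1 ((z.1 0).1) + (z.1 0).2 * (z.2.2.1 ((z.1 0).1) - z.2.1 ((z.1 0).1)) :=
      mlo.add (mu.mul (mhi.sub mlo))
    have mtail : Measurable fun z : (Fin (n+1) → α) × Par p => (fun i : Fin n => z.1 i.succ) :=
      measurable_pi_lambda _ fun i => (measurable_pi_apply i.succ).comp measurable_fst
    have mupdhi : Measurable fun z : (Fin (n+1) → α) × Par p =>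
        Function.update z.2.2.1 ((z.1 0).1)
          (z.2.1 ((z.1 0).1) + (z.1 0).2 * (z.2.2.1 ((z.1 0).1) - z.2.1 ((z.1 0).1))) :=
      (meas_update p).comp
        ((measurable_fst.comp (measurable_snd.comp measurable_snd)).prodMk (mj.prodMk ms))
    have mupdlo : Measurable fun z : (Fin (n+1) → α) × Par p =>
        Function.update z.2.1 ((z.1 0).1)
          (z.2.1 ((z.1 0).1) + (z.1 0).2 * (z.2.2.1 ((z.1 0).1) - z.2.1 ((z.1 0).1))) :=
      (meas_update p).comp
        ((measurable_fst.comp measurable_snd).prodMk (mj.prodMk ms))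
    -- branch condition sets
    have hc1 : MeasurableSet {z : (Fin (n+1) → α) × Par p |
        z.2.2.2.1 ((z.1 0).1) ≤ z.2.1 ((z.1 0).1) + (z.1 0).2 * (z.2.2.1 ((z.1 0).1) - z.2.1 ((z.1 0).1))
        ∧ z.2.2.2.2 ((z.1 0).1) ≤ z.2.1 ((z.1 0).1) + (z.1 0).2 * (z.2.2.1 ((z.1 0).1) - z.2.1 ((z.1 0).1))} :=
      (measurableSet_le mx ms).inter (measurableSet_le my ms)
    have hc2 : MeasurableSet {z : (Fin (n+1) → α) × Par p |
        z.2.1 ((z.1 0).1) + (z.1 0).2 * (z.2.2.1 ((z.1 0).1) - z.2.1 ((z.1 0).1)) < z.2.2.2.1 ((z.1 0).1)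
        ∧ z.2.1 ((z.1 0).1) + (z.1 0).2 * (z.2.2.1 ((z.1 0).1) - z.2.1 ((z.1 0).1)) < z.2.2.2.2 ((z.1 0).1)} :=
      (measurableSet_lt ms mx).inter (measurableSet_lt ms my)
    -- recursive preimages
    have hT1 : MeasurableSet {z : (Fin (n+1) → α) × Par p |
        sameCell p (List.ofFn fun i : Fin n => z.1 i.succ) z.2.1
          (Function.update z.2.2.1 ((z.1 0).1)
            (z.2.1 ((z.1 0).1) + (z.1 0).2 * (z.2.2.1 ((z.1 0).1) - z.2.1 ((z.1 0).1))))
          z.2.2.2.1 z.2.2.2.2} := by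
      have := (ih.preimage (show Measurable fun z : (Fin (n+1) → α) × Par p =>
        ((fun i : Fin n => z.1 i.succ), z.2.1,
          Function.update z.2.2.1 ((z.1 0).1)
            (z.2.1 ((z.1 0).1) + (z.1 0).2 * (z.2.2.1 ((z.1 0).1) - z.2.1 ((z.1 0).1))),
          z.2.2.2.1, z.2.2.2.2) from
        mtail.prodMk ((measurable_fst.comp measurable_snd).prodMk (mupdhi.prodMk
          ((measurable_fst.comp (measurable_snd.comp (measurable_snd.comp measurable_snd))).prodMk
            (measurable_snd.comp (measurable_snd.comp (measurable_snd.comp measurable_snd))))))))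
      exact this
    have hT2 : MeasurableSet {z : (Fin (n+1) → α) × Par p |
        sameCell p (List.ofFn fun i : Fin n => z.1 i.succ)
          (Function.update z.2.1 ((z.1 0).1)
            (z.2.1 ((z.1 0).1) + (z.1 0).2 * (z.2.2.1 ((z.1 0).1) - z.2.1 ((z.1 0).1))))
          z.2.2.1 z.2.2.2.1 z.2.2.2.2} := by
      have := (ih.preimage (show Measurable fun z : (Fin (n+1) → α) × Par p =>
        ((fun i : Fin n => z.1 i.succ),
          Function.update z.2.1 ((z.1 0).1)
            (z.2.1 ((z.1 0).1) + (z.1 0).2 * (z.2.2.1 ((z.1 0).1) - z.2.1 ((z.1 0).1))),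
          z.2.2.1, z.2.2.2.1, z.2.2.2.2) from
        mtail.prodMk (mupdlo.prodMk ((measurable_fst.comp (measurable_snd.comp measurable_snd)).prodMk
          ((measurable_fst.comp (measurable_snd.comp (measurable_snd.comp measurable_snd))).prodMk
            (measurable_snd.comp (measurable_snd.comp (measurable_snd.comp measurable_snd))))))))
      exact this
    -- decompose the target set
    have hdecomp : {z : (Fin (n+1) → α) × Par p |
        sameCell p (List.ofFn z.1) z.2.1 z.2.2.1 z.2.2.2.1 z.2.2.2.2} =
        ({z | z.2.2.2.1 ((z.1 0).1) ≤ z.2.1 ((z.1 0).1) + (z.1 0).2 * (z.2.2.1 ((z.1 0).1) - z.2.1 ((z.1 0).1))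
            ∧ z.2.2.2.2 ((z.1 0).1) ≤ z.2.1 ((z.1 0).1) + (z.1 0).2 * (z.2.2.1 ((z.1 0).1) - z.2.1 ((z.1 0).1))}
          ∩ {z | sameCell p (List.ofFn fun i : Fin n => z.1 i.succ) z.2.1
              (Function.update z.2.2.1 ((z.1 0).1)
                (z.2.1 ((z.1 0).1) + (z.1 0).2 * (z.2.2.1 ((z.1 0).1) - z.2.1 ((z.1 0).1))))
              z.2.2.2.1 z.2.2.2.2})
        ∪ ({z | z.2.2.2.1 ((z.1 0).1) ≤ z.2.1 ((z.1 0).1) + (z.1 0).2 * (z.2.2.1 ((z.1 0).1) - z.2.1 ((z.1 0).1))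
            ∧ z.2.2.2.2 ((z.1 0).1) ≤ z.2.1 ((z.1 0).1) + (z.1 0).2 * (z.2.2.1 ((z.1 0).1) - z.2.1 ((z.1 0).1))}ᶜ
          ∩ ({z | z.2.1 ((z.1 0).1) + (z.1 0).2 * (z.2.2.1 ((z.1 0).1) - z.2.1 ((z.1 0).1)) < z.2.2.2.1 ((z.1 0).1)
            ∧ z.2.1 ((z.1 0).1) + (z.1 0).2 * (z.2.2.1 ((z.1 0).1) - z.2.1 ((z.1 0).1)) < z.2.2.2.2 ((z.1 0).1)}
          ∩ {z | sameCell p (List.ofFn fun i : Fin n => z.1 i.succ)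
              (Function.update z.2.1 ((z.1 0).1)
                (z.2.1 ((z.1 0).1) + (z.1 0).2 * (z.2.2.1 ((z.1 0).1) - z.2.1 ((z.1 0).1))))
              z.2.2.1 z.2.2.2.1 z.2.2.2.2})) := by
      ext z
      rw [Set.mem_setOf_eq, List.ofFn_succ]
      by_cases h1 : z.2.2.2.1 ((z.1 0).1) ≤ z.2.1 ((z.1 0).1) + (z.1 0).2 * (z.2.2.1 ((z.1 0).1) - z.2.1 ((z.1 0).1))
          ∧ z.2.2.2.2 ((z.1 0).1) ≤ z.2.1 ((z.1 0).1) + (z.1 0).2 * (z.2.2.1 ((z.1 0).1) - z.2.1 ((z.1 0).1)) <;>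
      by_cases h2 : z.2.1 ((z.1 0).1) + (z.1 0).2 * (z.2.2.1 ((z.1 0).1) - z.2.1 ((z.1 0).1)) < z.2.2.2.1 ((z.1 0).1)
          ∧ z.2.1 ((z.1 0).1) + (z.1 0).2 * (z.2.2.1 ((z.1 0).1) - z.2.1 ((z.1 0).1)) < z.2.2.2.2 ((z.1 0).1) <;>
      simp [sameCell, h1, h2]
    rw [hdecomp]
    exact (hc1.inter hT1).union (hc1.compl.inter (hc2.inter hT2))

lemma measurableSet_cellSet (p : ℕ) (n : ℕ) (lo hi x y : Fin p → ℝ) :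
    MeasurableSet {ω : Fin n → Fin p × ℝ | sameCell p (List.ofFn ω) lo hi x y} := by
  have := (measurableSet_joint p n).preimage
    (show Measurable fun ω : Fin n → Fin p × ℝ => (ω, lo, hi, x, y) from
      measurable_id.prodMk measurable_const)
  exact this

noncomputable def nuRF (p : ℕ) [NeZero p] : Measure (Fin p × ℝ) :=
  (PMF.uniformOfFintype (Fin p)).toMeasure.prod (volume.restrict (Set.Icc (0:ℝ) 1))

instance : IsProbabilityMeasure (volume.restrict (Set.Icc (0:ℝ) 1)) :=
  ⟨by simp [Real.volume_Icc]⟩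

instance (p : ℕ) [NeZero p] : IsProbabilityMeasure (nuRF p) := by
  unfold nuRF; infer_instance

noncomputable def muRF (p n : ℕ) [NeZero p] : Measure (Fin n → Fin p × ℝ) :=
  Measure.pi fun _ => nuRF p

instance (p n : ℕ) [NeZero p] : IsProbabilityMeasure (muRF p n) := by
  unfold muRF; infer_instance

noncomputable def IRF (p : ℕ) [NeZero p] (n : ℕ) (lo hi x y : Fin p → ℝ) : ℝ :=
  (muRF p n {ω | sameCell p (List.ofFn ω) lo hi x y}).toReal

noncomputable def gRF (p : ℕ) [NeZero p] (n : ℕ) (lo hi x y : Fin p → ℝ)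
    (a : Fin p × ℝ) : ℝ :=
  if x a.1 ≤ lo a.1 + a.2 * (hi a.1 - lo a.1) ∧ y a.1 ≤ lo a.1 + a.2 * (hi a.1 - lo a.1) then
    IRF p n lo (Function.update hi a.1 (lo a.1 + a.2 * (hi a.1 - lo a.1))) x y
  else if lo a.1 + a.2 * (hi a.1 - lo a.1) < x a.1 ∧ lo a.1 + a.2 * (hi a.1 - lo a.1) < y a.1 then
    IRF p n (Function.update lo a.1 (lo a.1 + a.2 * (hi a.1 - lo a.1))) hi x y
  else 0

lemma IRF_zero (p : ℕ) [NeZero p] (lo hi x y : Fin p → ℝ) : IRF p 0 lo hi x y = 1 := by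
  unfold IRF
  have : {ω : Fin 0 → Fin p × ℝ | sameCell p (List.ofFn ω) lo hi x y} = Set.univ := by
    ext ω; simp [List.ofFn_zero, sameCell]
  rw [this, measure_univ, ENNReal.toReal_one]

lemma IRF_nonneg (p : ℕ) [NeZero p] (n : ℕ) (lo hi x y : Fin p → ℝ) :
    0 ≤ IRF p n lo hi x y := ENNReal.toReal_nonneg

lemma IRF_le_one (p : ℕ) [NeZero p] (n : ℕ) (lo hi x y : Fin p → ℝ) :
    IRF p n lo hi x y ≤ 1 := by
  unfold IRF
  have := prob_le_one (μ := muRF p n)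
    (s := {ω | sameCell p (List.ofFn ω) lo hi x y})
  calc (muRF p n {ω | sameCell p (List.ofFn ω) lo hi x y}).toReal
      ≤ (1 : ENNReal).toReal := ENNReal.toReal_mono ENNReal.one_ne_top this
    _ = 1 := ENNReal.toReal_one

lemma ofFn_cons {n : ℕ} {β : Type*} (a : β) (ω : Fin n → β) :
    List.ofFn (Fin.cons a ω) = a :: List.ofFn ω := by
  simp [List.ofFn_succ]

lemma slice_toReal (p : ℕ) [NeZero p] (n : ℕ) (lo hi x y : Fin p → ℝ) (a : Fin p × ℝ) :
    (muRF p n {ω' : Fin n → Fin p × ℝ | sameCell p (a :: List.ofFn ω') lo hi x y}).toReal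
      = gRF p n lo hi x y a := by
  by_cases h1 : x a.1 ≤ lo a.1 + a.2 * (hi a.1 - lo a.1) ∧ y a.1 ≤ lo a.1 + a.2 * (hi a.1 - lo a.1)
  · have : {ω' : Fin n → Fin p × ℝ | sameCell p (a :: List.ofFn ω') lo hi x y}
        = {ω' | sameCell p (List.ofFn ω') lo
            (Function.update hi a.1 (lo a.1 + a.2 * (hi a.1 - lo a.1))) x y} := by
      ext ω'; simp [sameCell, h1]
    rw [this, gRF, if_pos h1]; rfl
  · by_cases h2 : lo a.1 + a.2 * (hi a.1 - lo a.1) < x a.1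
        ∧ lo a.1 + a.2 * (hi a.1 - lo a.1) < y a.1
    · have : {ω' : Fin n → Fin p × ℝ | sameCell p (a :: List.ofFn ω') lo hi x y}
          = {ω' | sameCell p (List.ofFn ω')
              (Function.update lo a.1 (lo a.1 + a.2 * (hi a.1 - lo a.1))) hi x y} := by
        ext ω'; simp [sameCell, h1, h2]
      rw [this, gRF, if_neg h1, if_pos h2]; rfl
    · have : {ω' : Fin n → Fin p × ℝ | sameCell p (a :: List.ofFn ω') lo hi x y} = ∅ := by
        ext ω'; simp [sameCell, h1, h2]
      rw [this, gRF, if_neg h1, if_neg h2, measure_empty, ENNReal.toReal_zero]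

lemma IRF_succ (p : ℕ) [NeZero p] (n : ℕ) (lo hi x y : Fin p → ℝ) :
    IRF p (n+1) lo hi x y = ∫ a, gRF p n lo hi x y a ∂(nuRF p) := by
  classical
  set e := MeasurableEquiv.piFinSuccAbove (fun _ : Fin (n+1) => Fin p × ℝ) 0 with he
  have hMP : MeasurePreserving e (muRF p (n+1)) ((nuRF p).prod (muRF p n)) :=
    measurePreserving_piFinSuccAbove (fun _ => nuRF p) 0
  set S := {ω : Fin (n+1) → Fin p × ℝ | sameCell p (List.ofFn ω) lo hi x y} with hSdef
  have hS : MeasurableSet S := measurableSet_cellSet p (n+1) lo hi x y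
  have key : muRF p (n+1) S = ((nuRF p).prod (muRF p n)) (e.symm ⁻¹' S) :=
    ((MeasurePreserving.symm e hMP).measure_preimage hS.nullMeasurableSet).symm
  have hT : MeasurableSet (e.symm ⁻¹' S) := e.symm.measurable hS
  have hslice : ∀ a : Fin p × ℝ, Prod.mk a ⁻¹' (e.symm ⁻¹' S)
      = {ω' : Fin n → Fin p × ℝ | sameCell p (a :: List.ofFn ω') lo hi x y} := by
    intro a
    ext ω'
    simp only [Set.mem_preimage, hSdef, Set.mem_setOf_eq]
    have : List.ofFn (e.symm (a, ω')) = a :: List.ofFn ω' := by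
      have h1 : e.symm (a, ω') = Fin.cons a ω' := by
        show (Fin.insertNthEquiv (fun _ : Fin (n+1) => Fin p × ℝ) 0) (a, ω') = Fin.cons a ω'
        simp [Fin.insertNthEquiv, Fin.insertNth_zero']
      rw [h1, ofFn_cons]
    rw [this]
  have hm : Measurable fun a => muRF p n (Prod.mk a ⁻¹' (e.symm ⁻¹' S)) :=
    measurable_measure_prodMk_left hT
  unfold IRF
  rw [← hSdef, key, Measure.prod_apply hT,
    ← integral_toReal hm.aemeasurable (ae_of_all _ fun a => measure_lt_top _ _)]
  refine integral_congr_ae (ae_of_all _ fun a => ?_)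
  show (muRF p n (Prod.mk a ⁻¹' (e.symm ⁻¹' S))).toReal = _
  rw [hslice a]
  exact slice_toReal p n lo hi x y a

lemma measurable_gRF (p : ℕ) [NeZero p] (n : ℕ) (lo hi x y : Fin p → ℝ) :
    Measurable (gRF p n lo hi x y) := by
  have hset : MeasurableSet {q : (Fin p × ℝ) × (Fin n → Fin p × ℝ) |
      sameCell p (q.1 :: List.ofFn q.2) lo hi x y} := by
    have heq : {q : (Fin p × ℝ) × (Fin n → Fin p × ℝ) | sameCell p (q.1 :: List.ofFn q.2) lo hi x y}
        = (fun q : (Fin p × ℝ) × (Fin n → Fin p × ℝ) => Fin.cons q.1 q.2) ⁻¹'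
          {ω : Fin (n+1) → Fin p × ℝ | sameCell p (List.ofFn ω) lo hi x y} := by
      ext q; simp [ofFn_cons]
    rw [heq]
    refine (measurableSet_cellSet p (n+1) lo hi x y).preimage ?_
    apply measurable_pi_lambda
    intro i
    refine Fin.cases ?_ (fun i => ?_) i
    · simpa using measurable_fst
    · simp only [Fin.cons_succ]; exact (measurable_pi_apply i).comp measurable_snd
  have hm := measurable_measure_prodMk_left (ν := muRF p n) hset
  have heq : gRF p n lo hi x y = fun a =>
      (muRF p n (Prod.mk a ⁻¹' {q : (Fin p × ℝ) × (Fin n → Fin p × ℝ) |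
        sameCell p (q.1 :: List.ofFn q.2) lo hi x y})).toReal := by
    funext a
    have : Prod.mk a ⁻¹' {q : (Fin p × ℝ) × (Fin n → Fin p × ℝ) |
        sameCell p (q.1 :: List.ofFn q.2) lo hi x y}
        = {ω' : Fin n → Fin p × ℝ | sameCell p (a :: List.ofFn ω') lo hi x y} := rfl
    rw [this, slice_toReal]
  rw [heq]
  exact hm.ennreal_toReal

lemma gRF_nonneg (p : ℕ) [NeZero p] (n : ℕ) (lo hi x y : Fin p → ℝ) (a : Fin p × ℝ) :
    0 ≤ gRF p n lo hi x y a := by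
  unfold gRF; split_ifs
  · exact IRF_nonneg _ _ _ _ _ _
  · exact IRF_nonneg _ _ _ _ _ _
  · exact le_refl 0

lemma gRF_le_one (p : ℕ) [NeZero p] (n : ℕ) (lo hi x y : Fin p → ℝ) (a : Fin p × ℝ) :
    gRF p n lo hi x y a ≤ 1 := by
  unfold gRF; split_ifs
  · exact IRF_le_one _ _ _ _ _ _
  · exact IRF_le_one _ _ _ _ _ _
  · exact zero_le_one

/-- the null set of "bad" split parameters -/
lemma ae_good (p : ℕ) [NeZero p] (lo hi x y : Fin p → ℝ) (hlt : ∀ j, lo j < hi j) :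
    ∀ᵐ a ∂(nuRF p), (0 < a.2 ∧ a.2 < 1) ∧
      lo a.1 + a.2 * (hi a.1 - lo a.1) ≠ x a.1 ∧
      lo a.1 + a.2 * (hi a.1 - lo a.1) ≠ y a.1 := by
  have hIcc : ∀ᵐ a ∂(nuRF p), a.2 ∈ Set.Icc (0:ℝ) 1 := by
    rw [ae_iff]
    have : {a : Fin p × ℝ | ¬ a.2 ∈ Set.Icc (0:ℝ) 1}
        = (Set.univ : Set (Fin p)) ×ˢ (Set.Icc (0:ℝ) 1)ᶜ := by
      ext a; simp [Set.mem_prod]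
    rw [this, nuRF, Measure.prod_prod, Measure.restrict_apply (measurableSet_Icc.compl)]
    simp
  have hbadE : ∀ᵐ a ∂(nuRF p), a.2 ∉ ({0, 1, (x a.1 - lo a.1) / (hi a.1 - lo a.1),
      (y a.1 - lo a.1) / (hi a.1 - lo a.1)} : Set ℝ) := by
    rw [ae_iff]
    refine measure_mono_null (fun a ha => ?_)
      (measure_iUnion_null (s := fun j : Fin p => ({j} : Set (Fin p)) ×ˢ
        ({0, 1, (x j - lo j) / (hi j - lo j), (y j - lo j) / (hi j - lo j)} : Set ℝ)) fun j => ?_)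
    · simp only [Set.mem_setOf_eq, not_not] at ha
      exact Set.mem_iUnion.2 ⟨a.1, Set.mem_prod.2 ⟨rfl, ha⟩⟩
    · rw [nuRF, Measure.prod_prod]
      have h0 : (volume.restrict (Set.Icc (0:ℝ) 1))
          ({0, 1, (x j - lo j) / (hi j - lo j), (y j - lo j) / (hi j - lo j)} : Set ℝ) = 0 := by
        rw [Measure.restrict_apply (by measurability)]
        refine measure_mono_null Set.inter_subset_left ?_
        exact Set.Countable.measure_zero (Set.Finite.countable (Set.toFinite _)) volume
      rw [h0, mul_zero]
  filter_upwards [hIcc, hbadE] with a ha hb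
  simp only [Set.mem_insert_iff, Set.mem_singleton_iff, not_or] at hb
  obtain ⟨h0, h1, hrx, hry⟩ := hb
  have hd : hi a.1 - lo a.1 ≠ 0 := ne_of_gt (sub_pos.2 (hlt a.1))
  refine ⟨⟨lt_of_le_of_ne ha.1 (Ne.symm h0), lt_of_le_of_ne ha.2 h1⟩, ?_, ?_⟩
  · intro hc
    apply hrx
    field_simp
    linarith
  · intro hc
    apply hry
    field_simp
    linarith

lemma IRF_contAt (p : ℕ) [NeZero p] (n : ℕ) :
    ∀ (lo hi x y : Fin p → ℝ), (∀ j, lo j < hi j) →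
    ContinuousAt (fun q : Par p => IRF p n q.1 q.2.1 q.2.2.1 q.2.2.2) (lo, hi, x, y) := by
  induction n with
  | zero =>
    intro lo hi x y _
    have : (fun q : Par p => IRF p 0 q.1 q.2.1 q.2.2.1 q.2.2.2) = fun _ => 1 :=
      funext fun q => IRF_zero p _ _ _ _
    rw [this]; exact continuousAt_const
  | succ n ih =>
    intro lo hi x y hlt
    have hrw : (fun q : Par p => IRF p (n+1) q.1 q.2.1 q.2.2.1 q.2.2.2)
        = fun q : Par p => ∫ a, gRF p n q.1 q.2.1 q.2.2.1 q.2.2.2 a ∂(nuRF p) :=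
      funext fun q => IRF_succ p n q.1 q.2.1 q.2.2.1 q.2.2.2
    rw [hrw]
    refine continuousAt_of_dominated (bound := fun _ => 1) ?_ ?_ (integrable_const 1) ?_
    · exact Filter.Eventually.of_forall fun q =>
        (measurable_gRF p n q.1 q.2.1 q.2.2.1 q.2.2.2).aestronglyMeasurable
    · refine Filter.Eventually.of_forall fun q => ae_of_all _ fun a => ?_
      rw [Real.norm_eq_abs, abs_le]
      exact ⟨le_trans (by norm_num) (gRF_nonneg p n _ _ _ _ a), gRF_le_one p n _ _ _ _ a⟩
    · -- a.e. continuity in the parameters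
      filter_upwards [ae_good p lo hi x y hlt] with a ha
      obtain ⟨⟨hu0, hu1⟩, hsx, hsy⟩ := ha
      have hd : (0:ℝ) < hi a.1 - lo a.1 := sub_pos.2 (hlt a.1)
      have hs_lo : lo a.1 < lo a.1 + a.2 * (hi a.1 - lo a.1) := by nlinarith
      have hs_hi : lo a.1 + a.2 * (hi a.1 - lo a.1) < hi a.1 := by nlinarith
      -- continuous auxiliary maps
      have hsc : Continuous fun q : Par p => q.1 a.1 + a.2 * (q.2.1 a.1 - q.1 a.1) :=
        ((continuous_apply a.1).comp continuous_fst).add (continuous_const.mul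
          (((continuous_apply a.1).comp (continuous_fst.comp continuous_snd)).sub
            ((continuous_apply a.1).comp continuous_fst)))
      have hxc : Continuous fun q : Par p => q.2.2.1 a.1 :=
        (continuous_apply a.1).comp (continuous_fst.comp (continuous_snd.comp continuous_snd))
      have hyc : Continuous fun q : Par p => q.2.2.2 a.1 :=
        (continuous_apply a.1).comp (continuous_snd.comp (continuous_snd.comp continuous_snd))
      have hupdhi : Continuous fun q : Par p =>
          Function.update q.2.1 a.1 (q.1 a.1 + a.2 * (q.2.1 a.1 - q.1 a.1)) := by
        apply continuous_pi; intro j'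
        by_cases hj : j' = a.1
        · subst hj; simp only [Function.update_self]; exact hsc
        · simp only [Function.update_of_ne hj]
          exact (continuous_apply j').comp (continuous_fst.comp continuous_snd)
      have hupdlo : Continuous fun q : Par p =>
          Function.update q.1 a.1 (q.1 a.1 + a.2 * (q.2.1 a.1 - q.1 a.1)) := by
        apply continuous_pi; intro j'
        by_cases hj : j' = a.1
        · subst hj; simp only [Function.update_self]; exact hsc
        · simp only [Function.update_of_ne hj]
          exact (continuous_apply j').comp continuous_fst
      rcases hsx.lt_or_gt with hx1 | hx1 <;> rcases hsy.lt_or_gt with hy1 | hy1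
      · -- s < x and s < y : second branch
        have h1 : ∀ᶠ q : Par p in 𝓝 (lo, hi, x, y),
            q.1 a.1 + a.2 * (q.2.1 a.1 - q.1 a.1) < q.2.2.1 a.1 :=
          ContinuousAt.eventually_lt hsc.continuousAt hxc.continuousAt hx1
        have h2 : ∀ᶠ q : Par p in 𝓝 (lo, hi, x, y),
            q.1 a.1 + a.2 * (q.2.1 a.1 - q.1 a.1) < q.2.2.2 a.1 :=
          ContinuousAt.eventually_lt hsc.continuousAt hyc.continuousAt hy1
        have hev : (fun q : Par p => IRF p n
              (Function.update q.1 a.1 (q.1 a.1 + a.2 * (q.2.1 a.1 - q.1 a.1)))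
              q.2.1 q.2.2.1 q.2.2.2)
            =ᶠ[𝓝 (lo, hi, x, y)]
            fun q : Par p => gRF p n q.1 q.2.1 q.2.2.1 q.2.2.2 a := by
          filter_upwards [h1, h2] with q hq1 hq2
          simp only [gRF]
          rw [if_neg (fun hc => absurd hc.1 (not_le.2 hq1)), if_pos ⟨hq1, hq2⟩]
        have hlt' : ∀ j', Function.update lo a.1 (lo a.1 + a.2 * (hi a.1 - lo a.1)) j' < hi j' := by
          intro j'; rcases eq_or_ne j' a.1 with h | h
          · subst h; rw [Function.update_self]; exact hs_hi
          · rw [Function.update_of_ne h]; exact hlt j'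
        have hIH := ih (Function.update lo a.1 (lo a.1 + a.2 * (hi a.1 - lo a.1))) hi x y hlt'
        have hmapc : ContinuousAt (fun q : Par p =>
            ((Function.update q.1 a.1 (q.1 a.1 + a.2 * (q.2.1 a.1 - q.1 a.1))),
              q.2.1, q.2.2.1, q.2.2.2)) (lo, hi, x, y) :=
          (hupdlo.prodMk ((continuous_fst.comp continuous_snd).prodMk
            ((continuous_fst.comp (continuous_snd.comp continuous_snd)).prodMk
              (continuous_snd.comp (continuous_snd.comp continuous_snd))))).continuousAt
        have hcmp : ContinuousAt ((fun q : Par p => IRF p n q.1 q.2.1 q.2.2.1 q.2.2.2) ∘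
            (fun q : Par p =>
              ((Function.update q.1 a.1 (q.1 a.1 + a.2 * (q.2.1 a.1 - q.1 a.1))),
                q.2.1, q.2.2.1, q.2.2.2))) (lo, hi, x, y) := ContinuousAt.comp hIH hmapc
        exact hcmp.congr hev
      · -- s < x and y < s : separated, zero
        have h1 : ∀ᶠ q : Par p in 𝓝 (lo, hi, x, y),
            q.1 a.1 + a.2 * (q.2.1 a.1 - q.1 a.1) < q.2.2.1 a.1 :=
          ContinuousAt.eventually_lt hsc.continuousAt hxc.continuousAt hx1
        have h2 : ∀ᶠ q : Par p in 𝓝 (lo, hi, x, y),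
            q.2.2.2 a.1 < q.1 a.1 + a.2 * (q.2.1 a.1 - q.1 a.1) :=
          ContinuousAt.eventually_lt hyc.continuousAt hsc.continuousAt hy1
        have hev : (fun _ : Par p => (0:ℝ))
            =ᶠ[𝓝 (lo, hi, x, y)]
            fun q : Par p => gRF p n q.1 q.2.1 q.2.2.1 q.2.2.2 a := by
          filter_upwards [h1, h2] with q hq1 hq2
          simp only [gRF]
          rw [if_neg (fun hc => absurd hc.1 (not_le.2 hq1)),
            if_neg (fun hc => absurd hc.2 (not_lt.2 hq2.le))]
        exact continuousAt_const.congr hev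
      · -- x < s and s < y : separated, zero
        have h1 : ∀ᶠ q : Par p in 𝓝 (lo, hi, x, y),
            q.2.2.1 a.1 < q.1 a.1 + a.2 * (q.2.1 a.1 - q.1 a.1) :=
          ContinuousAt.eventually_lt hxc.continuousAt hsc.continuousAt hx1
        have h2 : ∀ᶠ q : Par p in 𝓝 (lo, hi, x, y),
            q.1 a.1 + a.2 * (q.2.1 a.1 - q.1 a.1) < q.2.2.2 a.1 :=
          ContinuousAt.eventually_lt hsc.continuousAt hyc.continuousAt hy1
        have hev : (fun _ : Par p => (0:ℝ))
            =ᶠ[𝓝 (lo, hi, x, y)]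
            fun q : Par p => gRF p n q.1 q.2.1 q.2.2.1 q.2.2.2 a := by
          filter_upwards [h1, h2] with q hq1 hq2
          simp only [gRF]
          rw [if_neg (fun hc => absurd hc.2 (not_le.2 hq2)),
            if_neg (fun hc => absurd hc.1 (not_lt.2 hq1.le))]
        exact continuousAt_const.congr hev
      · -- x < s and y < s : first branch
        have h1 : ∀ᶠ q : Par p in 𝓝 (lo, hi, x, y),
            q.2.2.1 a.1 < q.1 a.1 + a.2 * (q.2.1 a.1 - q.1 a.1) :=
          ContinuousAt.eventually_lt hxc.continuousAt hsc.continuousAt hx1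
        have h2 : ∀ᶠ q : Par p in 𝓝 (lo, hi, x, y),
            q.2.2.2 a.1 < q.1 a.1 + a.2 * (q.2.1 a.1 - q.1 a.1) :=
          ContinuousAt.eventually_lt hyc.continuousAt hsc.continuousAt hy1
        have hev : (fun q : Par p => IRF p n q.1
              (Function.update q.2.1 a.1 (q.1 a.1 + a.2 * (q.2.1 a.1 - q.1 a.1)))
              q.2.2.1 q.2.2.2)
            =ᶠ[𝓝 (lo, hi, x, y)]
            fun q : Par p => gRF p n q.1 q.2.1 q.2.2.1 q.2.2.2 a := by
          filter_upwards [h1, h2] with q hq1 hq2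
          simp only [gRF]
          rw [if_pos ⟨hq1.le, hq2.le⟩]
        have hlt' : ∀ j', lo j' < Function.update hi a.1 (lo a.1 + a.2 * (hi a.1 - lo a.1)) j' := by
          intro j'; rcases eq_or_ne j' a.1 with h | h
          · subst h; rw [Function.update_self]; exact hs_lo
          · rw [Function.update_of_ne h]; exact hlt j'
        have hIH := ih lo (Function.update hi a.1 (lo a.1 + a.2 * (hi a.1 - lo a.1))) x y hlt'
        have hmapc : ContinuousAt (fun q : Par p =>
            (q.1, (Function.update q.2.1 a.1 (q.1 a.1 + a.2 * (q.2.1 a.1 - q.1 a.1))),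
              q.2.2.1, q.2.2.2)) (lo, hi, x, y) :=
          (continuous_fst.prodMk (hupdhi.prodMk
            ((continuous_fst.comp (continuous_snd.comp continuous_snd)).prodMk
              (continuous_snd.comp (continuous_snd.comp continuous_snd))))).continuousAt
        have hcmp : ContinuousAt ((fun q : Par p => IRF p n q.1 q.2.1 q.2.2.1 q.2.2.2) ∘
            (fun q : Par p =>
              (q.1, (Function.update q.2.1 a.1 (q.1 a.1 + a.2 * (q.2.1 a.1 - q.1 a.1))),
                q.2.2.1, q.2.2.2))) (lo, hi, x, y) := ContinuousAt.comp hIH hmapc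
        exact hcmp.congr hev


/-- For the depth-`k` uniform random partitioning tree on `[0,1]^p` (at each of the `k`
steps a coordinate is chosen uniformly at random and a split point uniformly over the
current cell's range in that coordinate), the kernel
`K*(x,y) = P(y lies in the same leaf cell as x)` is a continuous function of `(x,y)` on
`[0,1]^p × [0,1]^p`. -/
theorem depth_k_uniform_partition_kernel_continuous
    (p k : ℕ) [NeZero p]
    (μ : Measure (Fin k → Fin p × ℝ))
    (hμ : μ = Measure.pi fun _ =>
      (PMF.uniformOfFintype (Fin p)).toMeasure.prod (volume.restrict (Set.Icc (0:ℝ) 1)))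
    (Kstar : (Fin p → ℝ) → (Fin p → ℝ) → ℝ)
    (hKstar : ∀ x y, Kstar x y =
      (μ {ω | sameCell p (List.ofFn ω) (fun _ => (0:ℝ)) (fun _ => (1:ℝ)) x y}).toReal) :
    ContinuousOn (fun q : (Fin p → ℝ) × (Fin p → ℝ) => Kstar q.1 q.2)
      ((Set.univ.pi fun _ => Set.Icc (0:ℝ) 1) ×ˢ (Set.univ.pi fun _ => Set.Icc (0:ℝ) 1)) := by
  have heq : (fun q : (Fin p → ℝ) × (Fin p → ℝ) => Kstar q.1 q.2)
      = fun q : (Fin p → ℝ) × (Fin p → ℝ) =>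
          IRF p k (fun _ => (0:ℝ)) (fun _ => (1:ℝ)) q.1 q.2 := by
    funext q
    rw [hKstar, hμ]
    rfl
  rw [heq]
  refine Continuous.continuousOn ?_
  rw [continuous_iff_continuousAt]
  intro q
  have h := IRF_contAt p k (fun _ => (0:ℝ)) (fun _ => (1:ℝ)) q.1 q.2 (fun _ => one_pos)
  have hm : ContinuousAt (fun q : (Fin p → ℝ) × (Fin p → ℝ) =>
      (((fun _ => (0:ℝ)) : Fin p → ℝ), ((fun _ => (1:ℝ)) : Fin p → ℝ), q.1, q.2)) q :=
    (continuous_const.prodMk (continuous_const.prodMk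
      (continuous_fst.prodMk continuous_snd))).continuousAt
  have hcmp : ContinuousAt ((fun r : Par p => IRF p k r.1 r.2.1 r.2.2.1 r.2.2.2) ∘
      (fun q : (Fin p → ℝ) × (Fin p → ℝ) =>
        (((fun _ => (0:ℝ)) : Fin p → ℝ), ((fun _ => (1:ℝ)) : Fin p → ℝ), q.1, q.2))) q :=
    ContinuousAt.comp h hm
  exact hcmp
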